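/- Let Σ ∈ S⁺ₙ, X a symmetric (Hermitian) matrix, and k ≥ 0 an integer. Then tr(Σ^{-2-k} X Σ^{k} X) ≥ tr(Σ^{-1-k} X Σ^{-1+k} X). -/
import Mathlib

open Matrix Finset

private lemma scal12 (k : ℕ) {a b : ℝ} (ha : 0 < a) (hb : 0 < b) :
    a ^ (-1 - (k:ℤ)) * b ^ (-1 + (k:ℤ)) + b ^ (-1 - (k:ℤ)) * a ^ (-1 + (k:ℤ))
      ≤ a ^ (-2 - (k:ℤ)) * b ^ (k:ℤ) + b ^ (-2 - (k:ℤ)) * a ^ (k:ℤ) := by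
  have e1 : ∀ x : ℝ, 0 < x → x ^ (-2 - (k:ℤ)) = (x^2 * x^k)⁻¹ := by
    intro x hx
    rw [show (-2 - (k:ℤ)) = -(((2 + k : ℕ) : ℤ)) by push_cast; ring, _root_.zpow_neg,
      zpow_natCast, pow_add]
  have e2 : ∀ x : ℝ, 0 < x → x ^ (-1 - (k:ℤ)) = (x * x^k)⁻¹ := by
    intro x hx
    rw [show (-1 - (k:ℤ)) = -(((1 + k : ℕ) : ℤ)) by push_cast; ring, _root_.zpow_neg,
      zpow_natCast, pow_add, pow_one]
  have e3 : ∀ x : ℝ, 0 < x → x ^ (-1 + (k:ℤ)) = x⁻¹ * x^k := by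
    intro x hx
    rw [zpow_add₀ hx.ne', _root_.zpow_neg_one, zpow_natCast]
  rw [e1 a ha, e1 b hb, e2 a ha, e2 b hb, e3 a ha, e3 b hb, zpow_natCast, zpow_natCast]
  set A := a ^ k with hA
  set B := b ^ k with hB
  have hA0 : 0 < A := pow_pos ha k
  have hB0 : 0 < B := pow_pos hb k
  have hid : ((a^2*A)⁻¹ * B + (b^2*B)⁻¹ * A) - ((a*A)⁻¹ * (b⁻¹*B) + (b*B)⁻¹ * (a⁻¹*A))
      = (a - b) * (a*A^2 - b*B^2) / (a^2*b^2*A*B) := by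
    field_simp
    ring
  have hnum : 0 ≤ (a - b) * (a*A^2 - b*B^2) := by
    rcases le_total a b with h | h
    · have hAB : A ≤ B := pow_le_pow_left₀ ha.le h k
      have hsq : A^2 ≤ B^2 := by nlinarith
      have h2 : a*A^2 ≤ b*B^2 := mul_le_mul h hsq (by positivity) hb.le
      nlinarith [mul_nonneg (sub_nonneg.2 h) (sub_nonneg.2 h2)]
    · have hAB : B ≤ A := pow_le_pow_left₀ hb.le h k
      have hsq : B^2 ≤ A^2 := by nlinarith
      have h2 : b*B^2 ≤ a*A^2 := mul_le_mul h hsq (by positivity) ha.le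
      nlinarith [mul_nonneg (sub_nonneg.2 h) (sub_nonneg.2 h2)]
  have hden : 0 < a^2*b^2*A*B := by positivity
  have := div_nonneg hnum hden.le
  linarith [hid ▸ this]

private lemma myConjPow {n : ℕ} (U D : Matrix (Fin n) (Fin n) ℝ)
    (hU1 : star U * U = 1) (hU2 : U * star U = 1) (m : ℕ) :
    (U * D * star U) ^ m = U * D ^ m * star U := by
  induction m with
  | zero => simp [hU2]
  | succ m ih =>
      rw [pow_succ, ih, pow_succ]
      calc U * D ^ m * star U * (U * D * star U)
          = U * D ^ m * (star U * U) * (D * star U) := by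
            simp only [Matrix.mul_assoc]
        _ = U * (D ^ m * D) * star U := by
            rw [hU1]
            simp only [Matrix.mul_one, Matrix.mul_assoc]

private lemma myConjZpow {n : ℕ} (U : Matrix (Fin n) (Fin n) ℝ)
    (hU1 : star U * U = 1) (hU2 : U * star U = 1) (d : Fin n → ℝ) (hd : ∀ i, d i ≠ 0)
    (z : ℤ) :
    (U * diagonal d * star U) ^ z = U * diagonal (fun i => d i ^ z) * star U := by
  obtain ⟨m, rfl | rfl⟩ := Int.eq_nat_or_neg z
  · have hfun : (fun i => d i ^ ((m:ℕ):ℤ)) = d ^ m := by funext i; simp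
    rw [zpow_natCast, myConjPow U _ hU1 hU2, diagonal_pow, hfun]
  · rw [Matrix.zpow_neg_natCast, myConjPow U _ hU1 hU2, diagonal_pow]
    apply Matrix.inv_eq_right_inv
    calc U * diagonal (d ^ m) * star U * (U * diagonal (fun i => d i ^ (-(m:ℤ))) * star U)
        = U * diagonal (d ^ m) * (star U * U) * (diagonal (fun i => d i ^ (-(m:ℤ))) * star U) := by
          simp only [Matrix.mul_assoc]
      _ = U * (diagonal (d ^ m) * diagonal (fun i => d i ^ (-(m:ℤ)))) * star U := by
          rw [hU1]; simp only [Matrix.mul_one, Matrix.mul_assoc]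
      _ = 1 := by
          rw [diagonal_mul_diagonal]
          have : (fun i => (d ^ m) i * d i ^ (-(m:ℤ))) = fun _ => (1:ℝ) := by
            funext i
            simp only [Pi.pow_apply, _root_.zpow_neg, zpow_natCast]
            exact mul_inv_cancel₀ (pow_ne_zero m (hd i))
          rw [this, diagonal_one, Matrix.mul_one, hU2]

private lemma sum_ineq12 {n : ℕ} (lam : Fin n → ℝ) (Y : Matrix (Fin n) (Fin n) ℝ)
    (hlam : ∀ i, 0 < lam i) (hYs : ∀ i j, Y j i = Y i j) (k : ℕ) :
    ∑ i, ∑ j, lam i ^ (-1 - (k:ℤ)) * Y i j * (lam j ^ (-1 + (k:ℤ)) * Y j i)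
      ≤ ∑ i, ∑ j, lam i ^ (-2 - (k:ℤ)) * Y i j * (lam j ^ (k:ℤ) * Y j i) := by
  set F : Fin n → Fin n → ℝ := fun i j =>
    lam i ^ (-2 - (k:ℤ)) * Y i j * (lam j ^ (k:ℤ) * Y j i)
      - lam i ^ (-1 - (k:ℤ)) * Y i j * (lam j ^ (-1 + (k:ℤ)) * Y j i) with hF
  have key : ∀ i j, 0 ≤ F i j + F j i := by
    intro i j
    have hs := scal12 k (hlam i) (hlam j)
    have e : F i j + F j i = Y i j ^ 2 *
        ((lam i ^ (-2 - (k:ℤ)) * lam j ^ (k:ℤ) + lam j ^ (-2 - (k:ℤ)) * lam i ^ (k:ℤ))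
          - (lam i ^ (-1 - (k:ℤ)) * lam j ^ (-1 + (k:ℤ))
            + lam j ^ (-1 - (k:ℤ)) * lam i ^ (-1 + (k:ℤ)))) := by
      simp only [hF, hYs i j]
      ring
    rw [e]
    exact mul_nonneg (sq_nonneg _) (sub_nonneg.2 hs)
  have hsum : 0 ≤ ∑ i, ∑ j, (F i j + F j i) :=
    Finset.sum_nonneg fun i _ => Finset.sum_nonneg fun j _ => key i j
  have hswap : ∑ i, ∑ j, F j i = ∑ i, ∑ j, F i j := Finset.sum_comm
  have hsplit : ∑ i, ∑ j, (F i j + F j i) = ∑ i, ∑ j, F i j + ∑ i, ∑ j, F j i := by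
    simp [Finset.sum_add_distrib]
  have hF0 : 0 ≤ ∑ i, ∑ j, F i j := by
    rw [hsplit, hswap] at hsum; linarith
  have hFsub : ∑ i, ∑ j, F i j
      = (∑ i, ∑ j, lam i ^ (-2 - (k:ℤ)) * Y i j * (lam j ^ (k:ℤ) * Y j i))
        - ∑ i, ∑ j, lam i ^ (-1 - (k:ℤ)) * Y i j * (lam j ^ (-1 + (k:ℤ)) * Y j i) := by
    simp [hF, Finset.sum_sub_distrib]
  linarith [hFsub ▸ hF0]

theorem stmt12 (n : ℕ) (S X : Matrix (Fin n) (Fin n) ℝ)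
    (hS : S.PosDef) (hX : X.IsSymm) (k : ℕ) :
    (S ^ (-2 - (k : ℤ)) * X * S ^ (k : ℤ) * X).trace ≥
      (S ^ (-1 - (k : ℤ)) * X * S ^ (-1 + (k : ℤ)) * X).trace := by
  have hH : S.IsHermitian := hS.1
  set U : Matrix (Fin n) (Fin n) ℝ := (hH.eigenvectorUnitary : Matrix (Fin n) (Fin n) ℝ)
    with hUdef
  have hU1 : star U * U = 1 := hH.eigenvectorUnitary.2.1
  have hU2 : U * star U = 1 := hH.eigenvectorUnitary.2.2
  set lam : Fin n → ℝ := hH.eigenvalues with hlamdef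
  have hlam : ∀ i, 0 < lam i := hS.eigenvalues_pos
  have hlam0 : ∀ i, lam i ≠ 0 := fun i => (hlam i).ne'
  have hsp : S = U * diagonal lam * star U := by
    have h := hH.spectral_theorem
    simpa using h
  have hz : ∀ z : ℤ, S ^ z = U * diagonal (fun i => lam i ^ z) * star U := by
    intro z
    conv_lhs => rw [hsp]
    exact myConjZpow U hU1 hU2 lam hlam0 z
  set Y : Matrix (Fin n) (Fin n) ℝ := star U * X * U with hYdef
  have hYs : ∀ i j, Y j i = Y i j := by
    have hT : Yᵀ = Y := by
      have hsU : star U = Uᵀ := rfl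
      rw [hYdef, Matrix.transpose_mul, Matrix.transpose_mul, hsU, Matrix.transpose_transpose,
        hX.eq, Matrix.mul_assoc]
    intro i j
    have := congrFun (congrFun hT j) i
    simpa [Matrix.transpose_apply] using this.symm
  have hcollapse : ∀ da db : Fin n → ℝ,
      ((U * diagonal da * star U) * X * (U * diagonal db * star U) * X).trace
        = ∑ i, ∑ j, da i * Y i j * (db j * Y j i) := by
    intro da db
    have h1 : (U * diagonal da * star U) * X * (U * diagonal db * star U) * X
        = U * (diagonal da * Y * (diagonal db * Y)) * star U := by
      simp only [hYdef, Matrix.mul_assoc, hU2, Matrix.mul_one]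
    rw [h1, Matrix.trace_mul_cycle, ← Matrix.mul_assoc, hU1, Matrix.one_mul]
    simp only [Matrix.trace, Matrix.diag, Matrix.mul_apply, Matrix.diagonal_mul,
      Matrix.mul_diagonal, Finset.sum_mul, Finset.mul_sum]
    simp [Matrix.diagonal_apply, ite_mul, mul_ite, Finset.sum_ite_eq, Finset.sum_ite_eq']
  rw [hz, hz, hz, hz, hcollapse, hcollapse]
  exact sum_ineq12 lam Y hlam hYs k
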